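/- Every invertible 2×2 real matrix A is proportional similar to a matrix of one of the following forms: the diagonal matrix diag(1, λ) for some λ ∈ ℝ∖{0}; the matrix [[1,1],[0,1]]; or the rotation matrix [[cos φ, −sin φ],[sin φ, cos φ]] for some φ ∈ (0, π). -/

import Mathlib

open Real

/-- Two square real matrices are *proportional similar* if `c • M = C⁻¹ * N * C` for some
nonzero scalar `c` and invertible matrix `C`. -/
def PropSimilar {n : ℕ} (M N : Matrix (Fin n) (Fin n) ℝ) : Prop :=
  ∃ (c : ℝ) (C : Matrix (Fin n) (Fin n) ℝ), c ≠ 0 ∧ IsUnit C ∧ c • M = C⁻¹ * N * C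

lemma mat2_eq {a b c d a' b' c' d' : ℝ} (h1 : a = a') (h2 : b = b') (h3 : c = c')
    (h4 : d = d') : !![a, b; c, d] = !![a', b'; c', d'] := by rw [h1, h2, h3, h4]

lemma smul_mat2 (r a b c d : ℝ) : r • !![a, b; c, d] = !![r * a, r * b; r * c, r * d] := by
  ext i j; fin_cases i <;> fin_cases j <;> simp [Matrix.smul_apply]

/-- If `A * P = P * (a • N)` with `P` invertible and `a ≠ 0`, then `A` is proportional
similar to `N` (via `c = a⁻¹` and `C = P⁻¹`). -/
lemma propSimilar_of_mul_eq {n : ℕ} (A N P : Matrix (Fin n) (Fin n) ℝ) (a : ℝ)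
    (ha : a ≠ 0) (hP : IsUnit P.det) (h : A * P = P * (a • N)) : PropSimilar A N := by
  refine ⟨a⁻¹, P⁻¹, inv_ne_zero ha, Matrix.isUnit_nonsing_inv_iff.mpr
    ((Matrix.isUnit_iff_isUnit_det P).mpr hP), ?_⟩
  rw [Matrix.nonsing_inv_nonsing_inv P hP]
  have h2 : P * N = a⁻¹ • (A * P) := by
    rw [h, Matrix.mul_smul, smul_smul, inv_mul_cancel₀ ha, one_smul]
  calc a⁻¹ • A = a⁻¹ • (A * (P * P⁻¹)) := by rw [Matrix.mul_nonsing_inv P hP, mul_one]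
    _ = (a⁻¹ • (A * P)) * P⁻¹ := by rw [← mul_assoc, Matrix.smul_mul]
    _ = P * N * P⁻¹ := by rw [h2]

lemma propSimilar_trans {n : ℕ} {A M N : Matrix (Fin n) (Fin n) ℝ}
    (h1 : PropSimilar A M) (h2 : PropSimilar M N) : PropSimilar A N := by
  obtain ⟨c1, C1, hc1, hC1, e1⟩ := h1
  obtain ⟨c2, C2, hc2, hC2, e2⟩ := h2
  refine ⟨c1 * c2, C2 * C1, mul_ne_zero hc1 hc2, hC2.mul hC1, ?_⟩
  rw [Matrix.mul_inv_rev]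
  calc (c1 * c2) • A = c2 • (c1 • A) := by rw [smul_smul, mul_comm]
    _ = c2 • (C1⁻¹ * M * C1) := by rw [e1]
    _ = C1⁻¹ * (c2 • M) * C1 := by rw [Matrix.mul_smul, Matrix.smul_mul]
    _ = C1⁻¹ * (C2⁻¹ * N * C2) * C1 := by rw [e2]
    _ = C1⁻¹ * C2⁻¹ * N * (C2 * C1) := by simp only [mul_assoc]

/-- Classification of companion matrices `!![0, -d; 1, t]` with `d ≠ 0`. -/
lemma companion_classify (t d : ℝ) (hd : d ≠ 0) :
    (∃ l : ℝ, l ≠ 0 ∧ PropSimilar !![0, -d; 1, t] !![1, 0; 0, l]) ∨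
    PropSimilar !![0, -d; 1, t] !![1, 1; 0, 1] ∨
    (∃ φ ∈ Set.Ioo (0 : ℝ) π,
      PropSimilar !![0, -d; 1, t] !![Real.cos φ, -Real.sin φ; Real.sin φ, Real.cos φ]) := by
  rcases lt_trichotomy (t ^ 2 - 4 * d) 0 with hΔ | hΔ | hΔ
  · -- complex eigenvalues: rotation
    right; right
    have hd4 : 0 < 4 * d - t ^ 2 := by linarith
    have hdpos : 0 < d := by nlinarith [sq_nonneg t]
    set r : ℝ := Real.sqrt d with hr
    have hrpos : 0 < r := Real.sqrt_pos.mpr hdpos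
    have hr2 : r ^ 2 = d := Real.sq_sqrt hdpos.le
    set s : ℝ := Real.sqrt (4 * d - t ^ 2) / 2 with hs
    have hspos : 0 < s := by positivity
    have hs2 : s ^ 2 = (4 * d - t ^ 2) / 4 := by
      rw [hs, div_pow, Real.sq_sqrt hd4.le]; ring
    set x : ℝ := t / (2 * r) with hx
    have hx2 : x ^ 2 < 1 := by
      rw [hx, div_pow, div_lt_one (by positivity)]
      nlinarith
    have hx1 : -1 < x := by nlinarith
    have hx1' : x < 1 := by nlinarith
    set φ : ℝ := Real.arccos x with hφ
    have hcos : Real.cos φ = x := Real.cos_arccos hx1.le hx1'.le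
    have key : (1 : ℝ) - x ^ 2 = (s / r) ^ 2 := by
      have h1 : x ^ 2 = t ^ 2 / (4 * d) := by
        rw [hx, div_pow, show (2 * r) ^ 2 = 4 * d by rw [mul_pow, hr2]; ring]
      have h2 : (s / r) ^ 2 = (4 * d - t ^ 2) / (4 * d) := by
        rw [div_pow, hs2, hr2]; field_simp
      rw [h1, h2]; field_simp
    have hsin : Real.sin φ = s / r := by
      rw [hφ, Real.sin_arccos, key, Real.sqrt_sq (by positivity)]
    refine ⟨φ, ⟨Real.arccos_pos.mpr hx1', lt_of_le_of_ne (Real.arccos_le_pi x)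
      (fun h => by have := Real.arccos_eq_pi.mp h; linarith)⟩, ?_⟩
    apply propSimilar_of_mul_eq _ _ !![0, -d / s; 1, t / (2 * s)] r hrpos.ne'
    · rw [Matrix.det_fin_two_of]
      have : (0 : ℝ) * (t / (2 * s)) - -d / s * 1 = d / s := by ring
      rw [this]
      exact isUnit_iff_ne_zero.mpr (div_ne_zero hd hspos.ne')
    · have hrc : r * Real.cos φ = t / 2 := by
        rw [hcos, hx]; field_simp
      have hrs : r * Real.sin φ = s := by
        rw [hsin]; field_simp
      have hrs' : r * -Real.sin φ = -s := by rw [mul_neg, hrs]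
      have hrne := hrpos.ne'
      have hsne := hspos.ne'
      rw [smul_mat2, Matrix.mul_fin_two, Matrix.mul_fin_two]
      apply mat2_eq <;> simp only [hrs', hrc, hrs]
      · field_simp; ring
      · field_simp
        ring
      · field_simp; ring
      · field_simp
        have h4 : Real.sqrt (4 * d - t ^ 2) ^ 2 = 4 * d - t ^ 2 :=
          Real.sq_sqrt hd4.le
        linear_combination h4
  · -- double eigenvalue: Jordan block
    right; left
    have ht : t ≠ 0 := by
      intro h; rw [h] at hΔ; apply hd; linarith
    set α : ℝ := t / 2 with hα
    have hαne : α ≠ 0 := by simpa [hα] using ht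
    have hdα : d = α ^ 2 := by rw [hα]; field_simp; linarith
    apply propSimilar_of_mul_eq _ _ !![-α, 0; 1, 1] α hαne
    · rw [Matrix.det_fin_two_of]
      have : -α * 1 - 0 * 1 = -α := by ring
      rw [this]
      exact isUnit_iff_ne_zero.mpr (neg_ne_zero.mpr hαne)
    · rw [smul_mat2, Matrix.mul_fin_two, Matrix.mul_fin_two]
      apply mat2_eq <;> (try rw [hdα]) <;> (try rw [hα]) <;> ring
  · -- distinct real eigenvalues: diagonal
    left
    set s : ℝ := Real.sqrt (t ^ 2 - 4 * d) with hs
    have hspos : 0 < s := Real.sqrt_pos.mpr hΔ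
    have hs2 : s ^ 2 = t ^ 2 - 4 * d := Real.sq_sqrt hΔ.le
    set α : ℝ := (t + s) / 2 with hα
    set β : ℝ := (t - s) / 2 with hβ
    have hαβ : α * β = d := by rw [hα, hβ]; field_simp; nlinarith
    have hαne : α ≠ 0 := fun h => hd (by rw [← hαβ, h, zero_mul])
    have hβne : β ≠ 0 := fun h => hd (by rw [← hαβ, h, mul_zero])
    have htαβ : t = α + β := by rw [hα, hβ]; ring
    refine ⟨β / α, div_ne_zero hβne hαne, ?_⟩
    apply propSimilar_of_mul_eq _ _ !![-β, -α; 1, 1] α hαne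
    · rw [Matrix.det_fin_two_of]
      have : -β * 1 - -α * 1 = α - β := by ring
      rw [this, hα, hβ, show (t + s) / 2 - (t - s) / 2 = s by ring]
      exact isUnit_iff_ne_zero.mpr hspos.ne'
    · have hcan : α * (β / α) = β := by field_simp
      have hK : α • !![(1:ℝ), 0; 0, β / α] = !![α, 0; 0, β] := by
        rw [smul_mat2]
        exact mat2_eq (by ring) (by ring) (by ring) hcan
      rw [hK, Matrix.mul_fin_two, Matrix.mul_fin_two]
      apply mat2_eq
      · linear_combination hαβ
      · linear_combination hαβ
      · linear_combination htαβ
      · linear_combination htαβ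

theorem propSimilar_normal_forms_GL2 (A : Matrix (Fin 2) (Fin 2) ℝ) (hA : IsUnit A) :
    (∃ l : ℝ, l ≠ 0 ∧ PropSimilar A !![1, 0; 0, l]) ∨
    PropSimilar A !![1, 1; 0, 1] ∨
    (∃ φ ∈ Set.Ioo (0 : ℝ) π,
      PropSimilar A !![Real.cos φ, -Real.sin φ; Real.sin φ, Real.cos φ]) := by
  have hAeq : A = !![A 0 0, A 0 1; A 1 0, A 1 1] := by
    ext i j; fin_cases i <;> fin_cases j <;> simp
  set a := A 0 0 with ha
  set b := A 0 1 with hb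
  set c := A 1 0 with hc
  set e := A 1 1 with he
  have hdet : a * e - b * c ≠ 0 := by
    have h := (Matrix.isUnit_iff_isUnit_det A).mp hA
    rw [Matrix.det_fin_two] at h
    exact isUnit_iff_ne_zero.mp (by simpa [← ha, ← hb, ← hc, ← he, mul_comm] using h)
  by_cases hbc : b = 0 ∧ c = 0
  · -- A is diagonal
    obtain ⟨hb0, hc0⟩ := hbc
    have ha0 : a ≠ 0 := by intro h; apply hdet; rw [h, hb0]; ring
    have he0 : e ≠ 0 := by intro h; apply hdet; rw [h, hb0]; ring
    left
    refine ⟨e / a, div_ne_zero he0 ha0, ?_⟩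
    apply propSimilar_of_mul_eq _ _ 1 a ha0
    · simp
    · rw [mul_one, one_mul, smul_mat2, hAeq, hb0, hc0]
      apply mat2_eq
      · ring
      · ring
      · ring
      · field_simp
  · -- A has a nonzero off-diagonal entry: similar to companion matrix
    have hM := companion_classify (a + e) (a * e - b * c) hdet
    have hcomp : PropSimilar A !![0, -(a * e - b * c); 1, a + e] := by
      rcases Classical.em (c = 0) with hc0 | hc0
      · have hb0 : b ≠ 0 := fun h => hbc ⟨h, hc0⟩
        apply propSimilar_of_mul_eq _ _ !![0, b; 1, e] 1 one_ne_zero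
        · rw [Matrix.det_fin_two_of]
          have : (0 : ℝ) * e - b * 1 = -b := by ring
          rw [this]
          exact isUnit_iff_ne_zero.mpr (neg_ne_zero.mpr hb0)
        · rw [one_smul, hAeq, Matrix.mul_fin_two, Matrix.mul_fin_two, hc0]
          apply mat2_eq <;> ring
      · apply propSimilar_of_mul_eq _ _ !![1, a; 0, c] 1 one_ne_zero
        · rw [Matrix.det_fin_two_of]
          have : (1 : ℝ) * c - a * 0 = c := by ring
          rw [this]
          exact isUnit_iff_ne_zero.mpr hc0
        · rw [one_smul, hAeq, Matrix.mul_fin_two, Matrix.mul_fin_two]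
          apply mat2_eq <;> ring
    rcases hM with ⟨l, hl, h⟩ | h | ⟨φ, hφ, h⟩
    · exact Or.inl ⟨l, hl, propSimilar_trans hcomp h⟩
    · exact Or.inr (Or.inl (propSimilar_trans hcomp h))
    · exact Or.inr (Or.inr ⟨φ, hφ, propSimilar_trans hcomp h⟩)
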